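/- Let 1 ≤ a < b be integers, G a graph, and e = uv an edge of G. Then G − e has an [a,b]-factor if and only if for every S ⊆ V(G), δ_G(a,b;S) := b|S| − a|T| + d_{G−S}(T) ≥ ρ(S), where T = {x ∈ V(G)−S : d_{G−S}(x) ≤ a−1}, T' = {x ∈ V(G)−S : d_{(G−e)−S}(x) ≤ a−1}, and ρ(S) = 2 if both u and v are in T', ρ(S) = 1 if exactly one of u, v is in T' and the other lies in G − (S ∪ T'), and ρ(S) = 0 otherwise. -/

import Mathlib

open Finset
open scoped Classical

/-- Degree of a vertex in a simple graph (as `Set.ncard` of its neighbor set). -/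
noncomputable def deg {W : Type*} (G : SimpleGraph W) (v : W) : ℕ := (G.neighborSet v).ncard

/-- `G` has an `[a,b]`-factor: a spanning subgraph `H ≤ G` with `a ≤ deg_H v ≤ b` for all `v`. -/
def HasABFactor {W : Type*} (G : SimpleGraph W) (a b : ℕ) : Prop :=
  ∃ H : SimpleGraph W, H ≤ G ∧ ∀ v, a ≤ deg H v ∧ deg H v ≤ b

/-- Degree of `x` in `G - S` (neighbors of `x` outside `S`). -/
noncomputable def degS {W : Type*} (G : SimpleGraph W) (S : Set W) (x : W) : ℕ :=
  (G.neighborSet x \ S).ncard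

/-- Number of isolated vertices of `G - S`. -/
noncomputable def nIso {W : Type*} (G : SimpleGraph W) (S : Set W) : ℕ :=
  {x | x ∉ S ∧ degS G S x = 0}.ncard

/-- `d_{G-S}(T)`: sum of degrees in `G - S` of the vertices of `T`. -/
noncomputable def dSum {W : Type*} (G : SimpleGraph W) (S T : Set W) : ℕ :=
  ∑ᶠ x ∈ T, degS G S x

/-- `T = {x ∈ V(G) - S : d_{G-S}(x) ≤ a - 1}`. -/
def Tset {W : Type*} (G : SimpleGraph W) (S : Set W) (a : ℕ) : Set W :=
  {x | x ∉ S ∧ degS G S x ≤ a - 1}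

/-- Isolated toughness of a graph. -/
noncomputable def isoT {W : Type*} [Fintype W] (G : SimpleGraph W) : ℝ :=
  if G = ⊤ then (Fintype.card W : ℝ) - 1
  else sInf {r : ℝ | ∃ S : Set W, 2 ≤ nIso G S ∧ r = (S.ncard : ℝ) / (nIso G S : ℝ)}

section Basics
variable {V : Type*} [Fintype V]

/-- Neighbors as a `Finset`. -/
noncomputable def nbr (G : SimpleGraph V) (x : V) : Finset V := (G.neighborSet x).toFinset

lemma mem_nbr {G : SimpleGraph V} {x y : V} : y ∈ nbr G x ↔ G.Adj x y := by
  exact Set.mem_toFinset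

lemma deg_eq (G : SimpleGraph V) (x : V) : deg G x = (nbr G x).card := by
  simp [deg, nbr, Set.ncard_eq_toFinset_card']

lemma degS_eq (G : SimpleGraph V) (S : Set V) (x : V) :
    degS G S x = (nbr G x \ S.toFinset).card := by
  simp [degS, nbr, Set.ncard_eq_toFinset_card', Set.toFinset_diff]

lemma dSum_eq (G : SimpleGraph V) (S T : Set V) :
    dSum G S T = ∑ x ∈ T.toFinset, degS G S x := by
  rw [dSum, ← finsum_mem_coe_finset, Set.coe_toFinset]

lemma ncard_eq (s : Set V) : s.ncard = s.toFinset.card := Set.ncard_eq_toFinset_card' s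

/-- The deficiency of `S` as an integer. -/
noncomputable def DefZ (H : SimpleGraph V) (a : ℕ) (S : Set V) : ℤ :=
  ∑ x ∈ (Tset H S a).toFinset, ((a : ℤ) - degS H S x)

lemma cond_iff (H : SimpleGraph V) (a b : ℕ) (S : Set V) :
    (a * (Tset H S a).ncard ≤ b * S.ncard + dSum H S (Tset H S a)) ↔
      DefZ H a S ≤ b * S.toFinset.card := by
  rw [ncard_eq, ncard_eq, dSum_eq, DefZ, Finset.sum_sub_distrib, Finset.sum_const,
    nsmul_eq_mul, ← Nat.cast_le (α := ℤ)]
  push_cast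
  constructor <;> intro h <;> linarith

/-- Double counting of edges of `F` between `P` and `Q`. -/
lemma double_count (F : SimpleGraph V) (P Q : Finset V) :
    ∑ x ∈ P, (nbr F x ∩ Q).card = ∑ y ∈ Q, (nbr F y ∩ P).card := by
  have h : ∀ (R : Finset V) (x : V), (nbr F x ∩ R).card = ∑ y ∈ R, if F.Adj x y then 1 else 0 := by
    intro R x
    rw [← Finset.card_filter]
    congr 1
    ext y
    simp [mem_nbr, and_comm]
  simp only [h]
  rw [Finset.sum_comm]
  congr 1; ext y; congr 1; ext x
  simp [SimpleGraph.adj_comm]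

/-- Necessity: an `[a,b]`-factor gives the deficiency condition. -/
lemma necessity {H : SimpleGraph V} {a b : ℕ} (hf : HasABFactor H a b) (S : Set V) :
    DefZ H a S ≤ b * S.toFinset.card := by
  obtain ⟨F, hFH, hdeg⟩ := hf
  have key : ∀ x ∈ (Tset H S a).toFinset, ((a : ℤ) - degS H S x) ≤ (nbr F x ∩ S.toFinset).card := by
    intro x hx
    have h1 : a ≤ deg F x := (hdeg x).1
    have h2 : deg F x = (nbr F x ∩ S.toFinset).card + (nbr F x \ S.toFinset).card := by
      rw [deg_eq]
      exact (Finset.card_inter_add_card_sdiff _ _).symm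
    have h3 : (nbr F x \ S.toFinset).card ≤ degS H S x := by
      rw [degS_eq]
      apply Finset.card_le_card
      intro y hy
      simp only [Finset.mem_sdiff, mem_nbr] at hy ⊢
      exact ⟨hFH hy.1, hy.2⟩
    have := h1.trans_eq h2
    push_cast
    omega
  calc DefZ H a S ≤ ∑ x ∈ (Tset H S a).toFinset, ((nbr F x ∩ S.toFinset).card : ℤ) :=
        Finset.sum_le_sum key
    _ = ((∑ x ∈ (Tset H S a).toFinset, (nbr F x ∩ S.toFinset).card : ℕ) : ℤ) := by push_cast; rfl
    _ = ((∑ y ∈ S.toFinset, (nbr F y ∩ (Tset H S a).toFinset).card : ℕ) : ℤ) := by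
        rw [double_count]
    _ ≤ ((∑ y ∈ S.toFinset, b : ℕ) : ℤ) := by
        apply Nat.cast_le.2
        apply Finset.sum_le_sum
        intro y _
        calc (nbr F y ∩ (Tset H S a).toFinset).card ≤ (nbr F y).card :=
              Finset.card_le_card (Finset.inter_subset_left)
          _ = deg F y := (deg_eq F y).symm
          _ ≤ b := (hdeg y).2
    _ ≤ b * S.toFinset.card := by
        rw [Finset.sum_const, smul_eq_mul]
        push_cast
        linarith

end Basics


section Suff
variable {V : Type*}

/-- `Good H F c p` : the reverse of `p` is an alternating trail (w.r.t. `F`) starting at `w`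
with first edge not in `F`; `c` tells whether the edge of `p` at the `v`-end is in `F`. -/
def Good (H F : SimpleGraph V) : ∀ {v w : V}, Bool → H.Walk v w → Prop
  | _, _, c, SimpleGraph.Walk.nil => c = true
  | _, _, c, SimpleGraph.Walk.cons (u := x) (v := y) _ p =>
      s(x, y) ∉ p.edges ∧
        (if c then s(x, y) ∈ F.edgeSet ∧ Good H F false p ∧ ¬p.Nil
         else s(x, y) ∉ F.edgeSet ∧ Good H F true p)

def InA (H F : SimpleGraph V) (w v : V) : Prop := ∃ p : H.Walk v w, Good H F false p

def InB (H F : SimpleGraph V) (w v : V) : Prop := ∃ p : H.Walk v w, Good H F true p ∧ ¬p.Nil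

lemma good_nil {H F : SimpleGraph V} {w : V} {c : Bool} :
    Good H F c (SimpleGraph.Walk.nil : H.Walk w w) ↔ c = true := Iff.rfl

lemma good_cons {H F : SimpleGraph V} {v y w : V} {c : Bool} {h : H.Adj v y} {p : H.Walk y w} :
    Good H F c (SimpleGraph.Walk.cons h p) ↔
      s(v, y) ∉ p.edges ∧
        (if c then s(v, y) ∈ F.edgeSet ∧ Good H F false p ∧ ¬p.Nil
         else s(v, y) ∉ F.edgeSet ∧ Good H F true p) := Iff.rfl

lemma good_false_not_nil {H F : SimpleGraph V} {v w : V} {p : H.Walk v w}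
    (hp : Good H F false p) : ¬p.Nil := by
  cases p with
  | nil => simp [good_nil] at hp
  | cons h q => exact SimpleGraph.Walk.not_nil_cons





noncomputable def Pf [Fintype V] {H : SimpleGraph V} {v w : V} (p : H.Walk v w) (x : V) :
    Finset V := Finset.univ.filter fun y => s(x, y) ∈ p.edges

variable [Fintype V]

lemma mem_Pf {H : SimpleGraph V} {v w : V} {p : H.Walk v w} {x y : V} :
    y ∈ Pf p x ↔ s(x, y) ∈ p.edges := by simp [Pf]

lemma Pf_nil {H : SimpleGraph V} {w : V} (x : V) :
    Pf (SimpleGraph.Walk.nil : H.Walk w w) x = ∅ := by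
  ext z; simp [mem_Pf]

lemma Pf_cons {H : SimpleGraph V} {v y w : V} (h : H.Adj v y) (q : H.Walk y w) (x : V) :
    Pf (SimpleGraph.Walk.cons h q) x =
      Pf q x ∪ (if x = v then {y} else if x = y then {v} else ∅) := by
  have hvy : v ≠ y := h.ne
  ext z
  by_cases hxv : x = v
  · subst hxv
    simp [mem_Pf, SimpleGraph.Walk.edges_cons, Sym2.eq_iff, hvy, or_comm]
  · by_cases hxy : x = y
    · subst hxy
      simp [mem_Pf, SimpleGraph.Walk.edges_cons, Sym2.eq_iff, hxv, or_comm]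
    · simp [mem_Pf, SimpleGraph.Walk.edges_cons, Sym2.eq_iff, hxv, hxy]

lemma good_count {H F : SimpleGraph V} {w v : V} {c : Bool} {p : H.Walk v w}
    (hp : Good H F c p) (x : V) :
    ((Pf p x \ nbr F x).card : ℤ) - ((Pf p x ∩ nbr F x).card : ℤ) =
      (if c then (-1 : ℤ) else 1) * (if x = v then 1 else 0) + (if x = w then 1 else 0) := by
  induction p generalizing c with
  | nil =>
    rw [good_nil] at hp; subst hp
    simp only [Pf_nil, Finset.empty_sdiff, Finset.empty_inter, Finset.card_empty,
      Nat.cast_zero, if_true]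
    ring
  | cons h q ih =>
    rename_i v₁ y₁ w₁
    rw [good_cons] at hp
    obtain ⟨hne, hrest⟩ := hp
    have hvy : v₁ ≠ y₁ := h.ne
    cases c with
    | false =>
      rw [if_neg (by simp)] at hrest
      obtain ⟨hnF, hgood⟩ := hrest
      have key := ih hgood
      by_cases hxv : x = v₁
      · subst hxv
        rw [Pf_cons, if_pos rfl]
        have h1 : y₁ ∉ Pf q x := fun hy => hne (mem_Pf.1 hy)
        have h2 : y₁ ∉ nbr F x := fun hy => hnF ((SimpleGraph.mem_edgeSet _).2 (mem_nbr.1 hy))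
        rw [Finset.union_comm, ← Finset.insert_eq,
          Finset.insert_sdiff_of_notMem _ h2,
          Finset.insert_inter_of_notMem h2,
          Finset.card_insert_of_notMem (fun hy => h1 (Finset.mem_sdiff.1 hy).1)]
        rw [if_neg hvy] at key
        norm_num at key ⊢
        push_cast
        linarith
      · by_cases hxy : x = y₁
        · subst hxy
          rw [Pf_cons, if_neg hxv, if_pos rfl]
          have h1 : v₁ ∉ Pf q x := fun hy => hne (by
            have := mem_Pf.1 hy
            rwa [Sym2.eq_swap] at this)
          have h2 : v₁ ∉ nbr F x := fun hy => hnF (by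
            have := (SimpleGraph.mem_edgeSet _).2 (mem_nbr.1 hy)
            rwa [Sym2.eq_swap] at this)
          rw [Finset.union_comm, ← Finset.insert_eq,
            Finset.insert_sdiff_of_notMem _ h2,
            Finset.insert_inter_of_notMem h2,
            Finset.card_insert_of_notMem (fun hy => h1 (Finset.mem_sdiff.1 hy).1)]
          rw [if_neg hxv]
          norm_num at key ⊢
          push_cast
          linarith
        · rw [Pf_cons, if_neg hxv, if_neg hxy, Finset.union_empty]
          rw [if_neg hxv]
          rw [if_neg hxy] at key
          norm_num at key ⊢
          push_cast
          linarith
    | true =>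
      rw [if_pos (by simp)] at hrest
      obtain ⟨hF, hgood, _⟩ := hrest
      have key := ih hgood
      by_cases hxv : x = v₁
      · subst hxv
        rw [Pf_cons, if_pos rfl]
        have h1 : y₁ ∉ Pf q x := fun hy => hne (mem_Pf.1 hy)
        have h2 : y₁ ∈ nbr F x := mem_nbr.2 ((SimpleGraph.mem_edgeSet _).1 hF)
        rw [Finset.union_comm, ← Finset.insert_eq,
          Finset.insert_sdiff_of_mem _ h2,
          Finset.insert_inter_of_mem h2,
          Finset.card_insert_of_notMem (fun hy => h1 (Finset.mem_inter.1 hy).1)]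
        rw [if_neg hvy] at key
        norm_num at key ⊢
        push_cast
        linarith
      · by_cases hxy : x = y₁
        · subst hxy
          rw [Pf_cons, if_neg hxv, if_pos rfl]
          have h1 : v₁ ∉ Pf q x := fun hy => hne (by
            have := mem_Pf.1 hy
            rwa [Sym2.eq_swap] at this)
          have h2 : v₁ ∈ nbr F x := mem_nbr.2 (((SimpleGraph.mem_edgeSet _).1 hF).symm)
          rw [Finset.union_comm, ← Finset.insert_eq,
            Finset.insert_sdiff_of_mem _ h2,
            Finset.insert_inter_of_mem h2,
            Finset.card_insert_of_notMem (fun hy => h1 (Finset.mem_inter.1 hy).1)]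
          rw [if_neg hxv]
          norm_num at key ⊢
          push_cast
          linarith
        · rw [Pf_cons, if_neg hxv, if_neg hxy, Finset.union_empty]
          rw [if_neg hxv]
          rw [if_neg hxy] at key
          norm_num at key ⊢
          push_cast
          linarith

/-- The graph obtained from `F` by switching the edges of the walk `p`. -/
def flipG (H F : SimpleGraph V) {v w : V} (p : H.Walk v w) : SimpleGraph V where
  Adj x y := (F.Adj x y ∧ s(x, y) ∉ p.edges) ∨ (H.Adj x y ∧ s(x, y) ∈ p.edges ∧ ¬F.Adj x y)
  symm := by
    constructor
    intro x y hxy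
    rcases hxy with ⟨h1, h2⟩ | ⟨h1, h2, h3⟩
    · exact Or.inl ⟨h1.symm, by rwa [Sym2.eq_swap]⟩
    · exact Or.inr ⟨h1.symm, by rwa [Sym2.eq_swap], fun hf => h3 hf.symm⟩
  loopless := by
    constructor
    intro x hx
    rcases hx with ⟨h1, _⟩ | ⟨h1, _⟩
    · exact F.irrefl h1
    · exact H.irrefl h1

lemma flipG_le {H F : SimpleGraph V} (hFH : F ≤ H) {v w : V} (p : H.Walk v w) :
    flipG H F p ≤ H := by
  intro x y hxy
  rcases hxy with ⟨h1, _⟩ | ⟨h1, _, _⟩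
  · exact hFH h1
  · exact h1

lemma nbr_flip {H F : SimpleGraph V} {v w : V} (p : H.Walk v w) (x : V) :
    nbr (flipG H F p) x = (nbr F x \ Pf p x) ∪ (Pf p x \ nbr F x) := by
  ext y
  simp only [mem_nbr, Finset.mem_union, Finset.mem_sdiff, mem_Pf]
  constructor
  · rintro (⟨h1, h2⟩ | ⟨h1, h2, h3⟩)
    · exact Or.inl ⟨h1, h2⟩
    · exact Or.inr ⟨h2, h3⟩
  · rintro (⟨h1, h2⟩ | ⟨h1, h2⟩)
    · exact Or.inl ⟨h1, h2⟩
    · exact Or.inr ⟨SimpleGraph.Walk.adj_of_mem_edges p h1, h1, h2⟩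

lemma deg_flip {H F : SimpleGraph V} {w v : V} {c : Bool} {p : H.Walk v w}
    (hp : Good H F c p) (x : V) :
    (deg (flipG H F p) x : ℤ) = (deg F x : ℤ) +
      (if c then (-1 : ℤ) else 1) * (if x = v then 1 else 0) + (if x = w then 1 else 0) := by
  have hcount := good_count hp x
  have hdisj : Disjoint (nbr F x \ Pf p x) (Pf p x \ nbr F x) :=
    disjoint_sdiff_sdiff
  have hcard : deg (flipG H F p) x = (nbr F x \ Pf p x).card + (Pf p x \ nbr F x).card := by
    rw [deg_eq, nbr_flip, Finset.card_union_of_disjoint hdisj]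
  have h1 : (nbr F x \ Pf p x).card + (nbr F x ∩ Pf p x).card = (nbr F x).card :=
    Finset.card_sdiff_add_card_inter _ _
  have h2 : (nbr F x ∩ Pf p x).card = (Pf p x ∩ nbr F x).card := by rw [Finset.inter_comm]
  have hdeg : (deg (flipG H F p) x : ℤ) =
      (deg F x : ℤ) - (Pf p x ∩ nbr F x).card + (Pf p x \ nbr F x).card := by
    rw [hcard, deg_eq F]
    push_cast
    omega
  rw [hdeg]
  linarith

lemma good_edge_mem {H F : SimpleGraph V} {w v : V} {c : Bool} {p : H.Walk v w}
    (hp : Good H F c p) {x y : V} (hxy : s(x, y) ∈ p.edges) :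
    (s(x, y) ∈ F.edgeSet → InB H F w x ∨ InB H F w y) ∧
    (s(x, y) ∉ F.edgeSet → InA H F w x ∨ InA H F w y) := by
  induction p generalizing c with
  | nil => simp at hxy
  | cons h q ih =>
    rename_i v₁ y₁ w₁
    have hp0 := hp
    rw [SimpleGraph.Walk.edges_cons, List.mem_cons] at hxy
    rw [good_cons] at hp
    obtain ⟨hne, hrest⟩ := hp
    rcases hxy with heq | hmem
    · have hv : x = v₁ ∧ y = y₁ ∨ x = y₁ ∧ y = v₁ := Sym2.eq_iff.1 heq
      constructor
      · intro hFe
        cases c with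
        | false =>
          rw [if_neg (by simp)] at hrest
          exact absurd (heq ▸ hFe) hrest.1
        | true =>
          have hBv : InB H F w₁ v₁ := ⟨SimpleGraph.Walk.cons h q, hp0,
            SimpleGraph.Walk.not_nil_cons⟩
          rcases hv with ⟨hx, _⟩ | ⟨_, hy⟩
          · exact Or.inl (hx ▸ hBv)
          · exact Or.inr (hy ▸ hBv)
      · intro hFe
        cases c with
        | true =>
          rw [if_pos (by simp)] at hrest
          exact absurd (heq ▸ hrest.1) hFe
        | false =>
          have hAv : InA H F w₁ v₁ := ⟨SimpleGraph.Walk.cons h q, hp0⟩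
          rcases hv with ⟨hx, _⟩ | ⟨_, hy⟩
          · exact Or.inl (hx ▸ hAv)
          · exact Or.inr (hy ▸ hAv)
    · cases c with
      | false =>
        rw [if_neg (by simp)] at hrest
        exact ih hrest.2 hmem
      | true =>
        rw [if_pos (by simp)] at hrest
        exact ih hrest.2.1 hmem

lemma InA_of_edge {H F : SimpleGraph V} {w x : V} (hadj : H.Adj w x)
    (hF : s(w, x) ∉ F.edgeSet) : InA H F w x :=
  ⟨SimpleGraph.Walk.cons hadj.symm SimpleGraph.Walk.nil, by
    rw [good_cons]
    refine ⟨by simp, ?_⟩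
    rw [if_neg (by simp)]
    exact ⟨by rwa [Sym2.eq_swap], rfl⟩⟩

lemma step_A {H F : SimpleGraph V} (hFH : F ≤ H) {w v x : V} (hA : InA H F w v)
    (hFadj : F.Adj v x) : InB H F w x ∨ InB H F w v := by
  obtain ⟨p, hp⟩ := hA
  by_cases hmem : s(x, v) ∈ p.edges
  · exact (good_edge_mem hp hmem).1
      (by rw [Sym2.eq_swap]; exact (SimpleGraph.mem_edgeSet _).2 hFadj)
  · left
    refine ⟨SimpleGraph.Walk.cons (hFH hFadj).symm p, ?_, SimpleGraph.Walk.not_nil_cons⟩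
    rw [good_cons]
    refine ⟨hmem, ?_⟩
    rw [if_pos rfl]
    exact ⟨by rw [Sym2.eq_swap]; exact (SimpleGraph.mem_edgeSet _).2 hFadj, hp,
      good_false_not_nil hp⟩

lemma step_B {H F : SimpleGraph V} {w v x : V} (hB : InB H F w v)
    (hHadj : H.Adj v x) (hnF : ¬F.Adj v x) : InA H F w x ∨ InA H F w v := by
  obtain ⟨p, hp, _⟩ := hB
  by_cases hmem : s(x, v) ∈ p.edges
  · exact (good_edge_mem hp hmem).2
      (fun hc => hnF ((SimpleGraph.mem_edgeSet _).1 hc).symm)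
  · left
    refine ⟨SimpleGraph.Walk.cons hHadj.symm p, ?_⟩
    rw [good_cons]
    refine ⟨hmem, ?_⟩
    rw [if_neg (by simp)]
    exact ⟨fun hc => hnF ((SimpleGraph.mem_edgeSet _).1 hc).symm, hp⟩

noncomputable def theta (F : SimpleGraph V) (a : ℕ) : ℕ := ∑ x, min a (deg F x)

lemma theta_diff (F' F : SimpleGraph V) (a : ℕ) (v w : V)
    (hsame : ∀ x, x ≠ v → x ≠ w → deg F' x = deg F x) :
    (theta F' a : ℤ) - theta F a =
      ∑ x ∈ ({v, w} : Finset V), ((min (a : ℤ) (deg F' x)) - min (a : ℤ) (deg F x)) := by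
  rw [theta, theta]
  push_cast
  rw [← Finset.sum_sub_distrib]
  refine (Finset.sum_subset (Finset.subset_univ _) (fun x _ hx => ?_)).symm
  simp only [Finset.mem_insert, Finset.mem_singleton, not_or] at hx
  rw [hsame x hx.1 hx.2]
  ring

lemma sufficiency {H : SimpleGraph V} {a b : ℕ} (ha : 1 ≤ a) (hab : a < b)
    (hC : ∀ S : Set V, DefZ H a S ≤ b * S.toFinset.card) : HasABFactor H a b := by
  have hne : Nonempty {F : SimpleGraph V // F ≤ H ∧ ∀ x, deg F x ≤ b} :=
    ⟨⟨⊥, bot_le, fun x => by simp [deg, SimpleGraph.neighborSet]⟩⟩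
  obtain ⟨⟨F, hFH, hFb⟩, hmaxs⟩ :=
    Finite.exists_max (fun F : {F : SimpleGraph V // F ≤ H ∧ ∀ x, deg F x ≤ b} => theta F.1 a)
  have hmax : ∀ F' : SimpleGraph V, F' ≤ H → (∀ x, deg F' x ≤ b) →
      theta F' a ≤ theta F a := fun F' h1 h2 => hmaxs ⟨F', h1, h2⟩
  by_cases hdef : ∀ x, a ≤ deg F x
  · exact ⟨F, hFH, fun x => ⟨hdef x, hFb x⟩⟩
  push_neg at hdef
  obtain ⟨w, hw⟩ := hdef
  exfalso
  -- w is not in A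
  have hAnotw : ¬InA H F w w := by
    rintro ⟨p, hp⟩
    set F' := flipG H F p with hF'
    have hdf : ∀ x, (deg F' x : ℤ) = deg F x +
        (if x = w then 1 else 0) + (if x = w then 1 else 0) := by
      intro x
      simpa using deg_flip hp x
    have hdfn : ∀ x, x ≠ w → deg F' x = deg F x := by
      intro x hxw
      have := hdf x
      rw [if_neg hxw] at this
      omega
    have hdfw : deg F' w = deg F w + 2 := by
      have := hdf w
      rw [if_pos rfl] at this
      omega
    have hble : ∀ x, deg F' x ≤ b := by
      intro x
      by_cases hxw : x = w
      · subst hxw; rw [hdfw]; omega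
      · rw [hdfn x hxw]; exact hFb x
    have hle := hmax F' (flipG_le hFH p) hble
    have hlt : theta F a < theta F' a := by
      refine Finset.sum_lt_sum (fun x _ => ?_) ⟨w, Finset.mem_univ w, ?_⟩
      · by_cases hxw : x = w
        · subst hxw; rw [hdfw]; omega
        · rw [hdfn x hxw]
      · rw [hdfw]; omega
    omega
  -- every vertex of A has F-degree exactly b
  have hAdeg : ∀ v, InA H F w v → deg F v = b := by
    intro v hA
    by_cases hvw : v = w
    · exact absurd (hvw ▸ hA) hAnotw
    by_contra hbne
    have hvb : deg F v < b := lt_of_le_of_ne (hFb v) hbne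
    obtain ⟨p, hp⟩ := hA
    set F' := flipG H F p with hF'
    have hdf : ∀ x, (deg F' x : ℤ) = deg F x +
        (if x = v then 1 else 0) + (if x = w then 1 else 0) := by
      intro x
      simpa using deg_flip hp x
    have hdfn : ∀ x, x ≠ v → x ≠ w → deg F' x = deg F x := by
      intro x hxv hxw
      have := hdf x
      rw [if_neg hxv, if_neg hxw] at this
      omega
    have hdfv : deg F' v = deg F v + 1 := by
      have := hdf v
      rw [if_pos rfl, if_neg hvw] at this
      omega
    have hdfw : deg F' w = deg F w + 1 := by
      have := hdf w
      rw [if_neg (fun hc => hvw hc.symm), if_pos rfl] at this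
      omega
    have hble : ∀ x, deg F' x ≤ b := by
      intro x
      by_cases hxv : x = v
      · subst hxv; rw [hdfv]; omega
      · by_cases hxw : x = w
        · subst hxw; rw [hdfw]; omega
        · rw [hdfn x hxv hxw]; exact hFb x
    have hle := hmax F' (flipG_le hFH p) hble
    have hlt : theta F a < theta F' a := by
      refine Finset.sum_lt_sum (fun x _ => ?_) ⟨w, Finset.mem_univ w, ?_⟩
      · by_cases hxv : x = v
        · subst hxv; rw [hdfv]; omega
        · by_cases hxw : x = w
          · subst hxw; rw [hdfw]; omega
          · rw [hdfn x hxv hxw]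
      · rw [hdfw]; omega
    omega
  -- every vertex of B has F-degree at most a
  have hBdeg : ∀ v, InB H F w v → deg F v ≤ a := by
    intro v hB
    by_cases hvw : v = w
    · subst hvw; omega
    by_contra hbig
    push_neg at hbig
    obtain ⟨p, hp, _⟩ := hB
    set F' := flipG H F p with hF'
    have hdf : ∀ x, (deg F' x : ℤ) = deg F x -
        (if x = v then 1 else 0) + (if x = w then 1 else 0) := by
      intro x
      have h0 := deg_flip hp x
      norm_num at h0
      rw [h0]
      by_cases hxv : x = v <;> simp [hxv] <;> ring
    have hdfn : ∀ x, x ≠ v → x ≠ w → deg F' x = deg F x := by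
      intro x hxv hxw
      have := hdf x
      rw [if_neg hxv, if_neg hxw] at this
      omega
    have hdfv : deg F' v + 1 = deg F v := by
      have := hdf v
      rw [if_pos rfl, if_neg hvw] at this
      omega
    have hdfw : deg F' w = deg F w + 1 := by
      have := hdf w
      rw [if_neg (fun hc => hvw hc.symm), if_pos rfl] at this
      omega
    have hble : ∀ x, deg F' x ≤ b := by
      intro x
      by_cases hxv : x = v
      · rw [hxv]; have h := hFb v; omega
      · by_cases hxw : x = w
        · subst hxw; rw [hdfw]; omega
        · rw [hdfn x hxv hxw]; exact hFb x
    have hle := hmax F' (flipG_le hFH p) hble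
    have hlt : theta F a < theta F' a := by
      refine Finset.sum_lt_sum (fun x _ => ?_) ⟨w, Finset.mem_univ w, ?_⟩
      · by_cases hxv : x = v
        · rw [hxv]; omega
        · by_cases hxw : x = w
          · subst hxw; rw [hdfw]; omega
          · rw [hdfn x hxv hxw]
      · rw [hdfw]; omega
    omega
  -- the bad set
  set S : Set V := {v | InA H F w v} with hS
  set 𝒜 : Finset V := Finset.univ.filter (fun v => InA H F w v) with h𝒜
  set 𝒟 : Finset V := insert w (Finset.univ.filter (fun v => InB H F w v)) with h𝒟
  have hSA : S.toFinset = 𝒜 := by ext x; simp [hS, h𝒜]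
  have hmem𝒜 : ∀ x, x ∈ 𝒜 ↔ InA H F w x := by intro x; simp [h𝒜]
  have hmem𝒟 : ∀ x, x ∈ 𝒟 ↔ (x = w ∨ InB H F w x) := by intro x; simp [h𝒟]
  have hDnotA : ∀ v ∈ 𝒟, ¬InA H F w v := by
    intro v hv hA
    rcases (hmem𝒟 v).1 hv with rfl | hB
    · exact hAnotw hA
    · have h1 := hAdeg v hA
      have h2 := hBdeg v hB
      omega
  have hDnotS : ∀ v ∈ 𝒟, v ∉ S := fun v hv hvS => hDnotA v hv hvS
  have hdegSeq : ∀ v ∈ 𝒟, (nbr H v \ S.toFinset) = (nbr F v \ S.toFinset) := by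
    intro v hv
    ext y
    simp only [Finset.mem_sdiff, mem_nbr, Set.mem_toFinset, hS, Set.mem_setOf_eq]
    constructor
    · rintro ⟨hHa, hnA⟩
      refine ⟨?_, hnA⟩
      by_contra hnF
      rcases (hmem𝒟 v).1 hv with rfl | hB
      · exact hnA (InA_of_edge hHa (fun hc => hnF ((SimpleGraph.mem_edgeSet _).1 hc)))
      · rcases step_B hB hHa hnF with hAy | hAv
        · exact hnA hAy
        · exact hDnotA v hv hAv
    · rintro ⟨hFa, hnA⟩
      exact ⟨hFH hFa, hnA⟩
  have hdegS' : ∀ v ∈ 𝒟, (degS H S v : ℤ) = deg F v - (nbr F v ∩ 𝒜).card := by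
    intro v hv
    rw [degS_eq, hdegSeq v hv, deg_eq, hSA]
    have := Finset.card_sdiff_add_card_inter (nbr F v) 𝒜
    push_cast
    omega
  have hnbrA : ∀ u, InA H F w u → nbr F u ⊆ 𝒟 := by
    intro u hA y hy
    rcases step_A hFH hA (mem_nbr.1 hy) with hBy | hBu
    · exact (hmem𝒟 y).2 (Or.inr hBy)
    · exfalso
      have h1 := hBdeg u hBu
      have h2 := hAdeg u hA
      omega
  have hcount1 : (b : ℤ) * 𝒜.card = ∑ v ∈ 𝒟, ((nbr F v ∩ 𝒜).card : ℤ) := by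
    have e1 : ∑ u ∈ 𝒜, (nbr F u ∩ 𝒟).card = ∑ v ∈ 𝒟, (nbr F v ∩ 𝒜).card :=
      double_count F 𝒜 𝒟
    have e2 : ∀ u ∈ 𝒜, (nbr F u ∩ 𝒟).card = b := by
      intro u hu
      rw [Finset.inter_eq_left.2 (hnbrA u ((hmem𝒜 u).1 hu)), ← deg_eq,
        hAdeg u ((hmem𝒜 u).1 hu)]
    calc (b : ℤ) * 𝒜.card = ((∑ u ∈ 𝒜, (nbr F u ∩ 𝒟).card : ℕ) : ℤ) := by
          rw [Finset.sum_congr rfl e2, Finset.sum_const, smul_eq_mul]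
          push_cast
          ring
      _ = _ := by rw [e1]; push_cast; rfl
  have hwD : w ∈ 𝒟 := by rw [hmem𝒟]; exact Or.inl rfl
  have hZ1 : (1 : ℤ) + b * 𝒜.card ≤ ∑ v ∈ 𝒟, ((a : ℤ) - degS H S v) := by
    have hsum : ∑ v ∈ 𝒟, ((a : ℤ) - degS H S v) =
        (∑ v ∈ 𝒟, ((a : ℤ) - deg F v)) + ∑ v ∈ 𝒟, ((nbr F v ∩ 𝒜).card : ℤ) := by
      rw [← Finset.sum_add_distrib]
      refine Finset.sum_congr rfl (fun v hv => ?_)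
      have := hdegS' v hv
      linarith
    have hterm : (1 : ℤ) ≤ ∑ v ∈ 𝒟, ((a : ℤ) - deg F v) := by
      have hnn : ∀ v ∈ 𝒟, (0 : ℤ) ≤ (a : ℤ) - deg F v := by
        intro v hv
        rcases (hmem𝒟 v).1 hv with rfl | hB
        · have : deg F v < a := hw
          push_cast
          omega
        · have := hBdeg v hB
          push_cast
          omega
      have hws := Finset.single_le_sum hnn hwD
      have : (1 : ℤ) ≤ (a : ℤ) - deg F w := by push_cast; omega
      linarith
    rw [hsum, ← hcount1]
    linarith
  have hTf : ∀ x, x ∈ (Tset H S a).toFinset ↔ (x ∉ S ∧ degS H S x ≤ a - 1) := by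
    intro x; exact Set.mem_toFinset
  have hZ2 : ∑ v ∈ 𝒟, ((a : ℤ) - degS H S v) ≤ DefZ H a S := by
    rw [DefZ]
    have hsplit := Finset.sum_inter_add_sum_sdiff 𝒟 (Tset H S a).toFinset
      (fun v => ((a : ℤ) - degS H S v))
    have hneg : ∑ v ∈ 𝒟 \ (Tset H S a).toFinset, ((a : ℤ) - degS H S v) ≤ 0 := by
      apply Finset.sum_nonpos
      intro v hv
      obtain ⟨hv𝒟, hvT⟩ := Finset.mem_sdiff.1 hv
      rw [hTf] at hvT
      push_neg at hvT
      have hdeg := hvT (hDnotS v hv𝒟)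
      omega
    have hpos : ∑ v ∈ 𝒟 ∩ (Tset H S a).toFinset, ((a : ℤ) - degS H S v) ≤
        ∑ v ∈ (Tset H S a).toFinset, ((a : ℤ) - degS H S v) := by
      refine Finset.sum_le_sum_of_subset_of_nonneg Finset.inter_subset_right
        (fun x hx _ => ?_)
      rw [hTf] at hx
      have := hx.2
      omega
    linarith
  have hfin := hC S
  rw [hSA] at hfin
  linarith

lemma cond_iff' (H : SimpleGraph V) (a b r : ℕ) (S : Set V) :
    (a * (Tset H S a).ncard + r ≤ b * S.ncard + dSum H S (Tset H S a)) ↔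
      DefZ H a S + r ≤ b * S.toFinset.card := by
  rw [ncard_eq, ncard_eq, dSum_eq, DefZ, Finset.sum_sub_distrib, Finset.sum_const,
    nsmul_eq_mul, ← Nat.cast_le (α := ℤ)]
  push_cast
  constructor <;> intro h <;> linarith

lemma sum_split_two (s : Finset V) (g : V → ℤ) {u v : V} (huv : u ≠ v) :
    ∑ x ∈ s, g x = (∑ x ∈ s \ ({u, v} : Finset V), g x)
      + ((if u ∈ s then g u else 0) + (if v ∈ s then g v else 0)) := by
  rw [← Finset.sum_inter_add_sum_sdiff s {u, v} g]
  have h1 : s ∩ ({u, v} : Finset V) = ({u, v} : Finset V).filter (fun x => x ∈ s) := by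
    rw [Finset.filter_mem_eq_inter, Finset.inter_comm]
  rw [h1, Finset.sum_filter, Finset.sum_pair huv]
  ring

section Del
variable (G : SimpleGraph V) {u v : V}

lemma del_adj (huv : u ≠ v) (x y : V) :
    (G.deleteEdges {s(u, v)}).Adj x y ↔ G.Adj x y ∧ ¬(x = u ∧ y = v) ∧ ¬(x = v ∧ y = u) := by
  rw [SimpleGraph.deleteEdges_adj]
  simp only [Set.mem_singleton_iff, Sym2.eq_iff]
  tauto

lemma degS_del_other (huv : u ≠ v) (S : Set V) {x : V} (hx : x ≠ u) (hx' : x ≠ v) :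
    degS (G.deleteEdges {s(u, v)}) S x = degS G S x := by
  rw [degS_eq, degS_eq]
  congr 1
  ext y
  simp only [Finset.mem_sdiff, mem_nbr, del_adj G huv, hx, hx', false_and, not_false_iff,
    and_true, true_and]

lemma degS_del_u_mem (huv : u ≠ v) (S : Set V) (hvS : v ∈ S) :
    degS (G.deleteEdges {s(u, v)}) S u = degS G S u := by
  rw [degS_eq, degS_eq]
  congr 1
  ext y
  rw [Finset.mem_sdiff, Finset.mem_sdiff, mem_nbr, mem_nbr, del_adj G huv]
  constructor
  · rintro ⟨⟨h1, _, _⟩, h4⟩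
    exact ⟨h1, h4⟩
  · rintro ⟨h1, h4⟩
    refine ⟨⟨h1, ?_, ?_⟩, h4⟩
    · rintro ⟨_, hy⟩
      exact h4 (by rw [hy]; exact Set.mem_toFinset.2 hvS)
    · rintro ⟨hc, _⟩
      exact huv hc

lemma degS_del_u_not (hadj : G.Adj u v) (S : Set V) (hvS : v ∉ S) :
    degS (G.deleteEdges {s(u, v)}) S u + 1 = degS G S u := by
  have huv : u ≠ v := hadj.ne
  rw [degS_eq, degS_eq]
  have h1 : nbr (G.deleteEdges {s(u, v)}) u \ S.toFinset =
      (nbr G u \ S.toFinset).erase v := by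
    ext y
    rw [Finset.mem_sdiff, Finset.mem_erase, Finset.mem_sdiff, mem_nbr, mem_nbr, del_adj G huv]
    constructor
    · rintro ⟨⟨h1, h2, _⟩, h4⟩
      exact ⟨fun hy => h2 ⟨rfl, hy⟩, h1, h4⟩
    · rintro ⟨h0, h1, h4⟩
      refine ⟨⟨h1, ?_, ?_⟩, h4⟩
      · rintro ⟨_, hy⟩
        exact h0 hy
      · rintro ⟨hc, _⟩
        exact huv hc
  have h2 : v ∈ nbr G u \ S.toFinset := by
    simp only [Finset.mem_sdiff, mem_nbr, Set.mem_toFinset]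
    exact ⟨hadj, hvS⟩
  rw [h1, Finset.card_erase_of_mem h2]
  have := Finset.card_pos.2 ⟨v, h2⟩
  omega

end Del

lemma degS_del_v_mem (G : SimpleGraph V) {u v : V} (huv : u ≠ v) (S : Set V) (huS : u ∈ S) :
    degS (G.deleteEdges {s(u, v)}) S v = degS G S v := by
  have := degS_del_u_mem (G := G) (u := v) (v := u) huv.symm S huS
  rwa [Sym2.eq_swap] at this

lemma degS_del_v_not (G : SimpleGraph V) {u v : V} (hadj : G.Adj u v) (S : Set V)
    (huS : u ∉ S) :
    degS (G.deleteEdges {s(u, v)}) S v + 1 = degS G S v := by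
  have := degS_del_u_not (G := G) (u := v) (v := u) hadj.symm S huS
  rwa [Sym2.eq_swap] at this

lemma transfer (G : SimpleGraph V) (a b : ℕ) (ha : 1 ≤ a) {u v : V} (huv : G.Adj u v)
    (S : Set V) :
    (a * (Tset (G.deleteEdges {s(u, v)}) S a).ncard ≤
        b * S.ncard + dSum (G.deleteEdges {s(u, v)}) S (Tset (G.deleteEdges {s(u, v)}) S a)) ↔
      (a * (Tset G S a).ncard +
          (if u ∈ Tset (G.deleteEdges {s(u, v)}) S a ∧ v ∈ Tset (G.deleteEdges {s(u, v)}) S a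
            then 2
           else if (u ∈ Tset (G.deleteEdges {s(u, v)}) S a ∧ v ∉ S ∧
                    v ∉ Tset (G.deleteEdges {s(u, v)}) S a) ∨
                   (v ∈ Tset (G.deleteEdges {s(u, v)}) S a ∧ u ∉ S ∧
                    u ∉ Tset (G.deleteEdges {s(u, v)}) S a) then 1
           else 0) ≤
        b * S.ncard + dSum G S (Tset G S a)) := by
  have hne : u ≠ v := huv.ne
  set H := G.deleteEdges {s(u, v)} with hH
  by_cases hS : u ∈ S ∨ v ∈ S
  · have hdeg : ∀ x, x ∉ S → degS H S x = degS G S x := by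
      intro x hx
      by_cases hxu : x = u
      · rcases hS with h | h
        · exact absurd h (hxu ▸ hx)
        · rw [hxu]; exact degS_del_u_mem G hne S h
      · by_cases hxv : x = v
        · rcases hS with h | h
          · rw [hxv]; exact degS_del_v_mem G hne S h
          · exact absurd h (hxv ▸ hx)
        · exact degS_del_other G hne S hxu hxv
    have hT : Tset H S a = Tset G S a := by
      ext x
      simp only [Tset, Set.mem_setOf_eq]
      constructor
      · rintro ⟨h1, h2⟩; exact ⟨h1, by rwa [← hdeg x h1]⟩
      · rintro ⟨h1, h2⟩; exact ⟨h1, by rwa [hdeg x h1]⟩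
    have hd : dSum H S (Tset H S a) = dSum G S (Tset G S a) := by
      rw [hT, dSum_eq, dSum_eq]
      refine Finset.sum_congr rfl (fun x hx => ?_)
      exact hdeg x (Set.mem_toFinset.1 hx).1
    have hρ : (if u ∈ Tset H S a ∧ v ∈ Tset H S a then 2
           else if (u ∈ Tset H S a ∧ v ∉ S ∧ v ∉ Tset H S a) ∨
                   (v ∈ Tset H S a ∧ u ∉ S ∧ u ∉ Tset H S a) then 1
           else (0 : ℕ)) = 0 := by
      rcases hS with h | h
      · have hu' : u ∉ Tset H S a := fun hc => hc.1 h
        rw [if_neg (fun hc => hu' hc.1), if_neg ?_]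
        rintro (⟨hc, _⟩ | ⟨_, hus, _⟩)
        · exact hu' hc
        · exact hus h
      · have hv' : v ∉ Tset H S a := fun hc => hc.1 h
        rw [if_neg (fun hc => hv' hc.2), if_neg ?_]
        rintro (⟨_, hvs, _⟩ | ⟨hc, _⟩)
        · exact hvs h
        · exact hv' hc
    rw [hT, hd] at *
    rw [hρ, add_zero]
  · push_neg at hS
    obtain ⟨hu, hv⟩ := hS
    have hdu : degS H S u + 1 = degS G S u := degS_del_u_not G huv S hv
    have hdv : degS H S v + 1 = degS G S v := degS_del_v_not G huv S hu
    have hothers : ∀ x, x ≠ u → x ≠ v → degS H S x = degS G S x :=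
      fun x hxu hxv => degS_del_other G hne S hxu hxv
    have hTf'mem : ∀ x, x ∈ (Tset H S a).toFinset ↔ (x ∉ S ∧ degS H S x ≤ a - 1) := by
      intro x; exact Set.mem_toFinset
    have hTfmem : ∀ x, x ∈ (Tset G S a).toFinset ↔ (x ∉ S ∧ degS G S x ≤ a - 1) := by
      intro x; exact Set.mem_toFinset
    have hρ : (if u ∈ Tset H S a ∧ v ∈ Tset H S a then 2
           else if (u ∈ Tset H S a ∧ v ∉ S ∧ v ∉ Tset H S a) ∨
                   (v ∈ Tset H S a ∧ u ∉ S ∧ u ∉ Tset H S a) then 1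
           else (0 : ℕ)) =
        (if u ∈ Tset H S a then 1 else 0) + (if v ∈ Tset H S a then 1 else 0) := by
      by_cases h1 : u ∈ Tset H S a <;> by_cases h2 : v ∈ Tset H S a <;>
        simp [h1, h2, hu, hv]
    have hkey : DefZ H a S = DefZ G a S +
        ((if u ∈ Tset H S a then 1 else 0) + (if v ∈ Tset H S a then 1 else 0) : ℤ) := by
      rw [DefZ, DefZ, sum_split_two ((Tset H S a).toFinset) _ hne,
        sum_split_two ((Tset G S a).toFinset) _ hne]
      have hdiffeq : (Tset H S a).toFinset \ ({u, v} : Finset V) =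
          (Tset G S a).toFinset \ ({u, v} : Finset V) := by
        ext x
        simp only [Finset.mem_sdiff, hTf'mem, hTfmem, Finset.mem_insert, Finset.mem_singleton]
        constructor
        · rintro ⟨⟨h1, h2⟩, h3⟩
          refine ⟨⟨h1, ?_⟩, h3⟩
          rwa [← hothers x (fun hc => h3 (Or.inl hc)) (fun hc => h3 (Or.inr hc))]
        · rintro ⟨⟨h1, h2⟩, h3⟩
          refine ⟨⟨h1, ?_⟩, h3⟩
          rwa [hothers x (fun hc => h3 (Or.inl hc)) (fun hc => h3 (Or.inr hc))]
      have hsumeq : ∑ x ∈ (Tset H S a).toFinset \ ({u, v} : Finset V),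
            ((a : ℤ) - degS H S x) =
          ∑ x ∈ (Tset G S a).toFinset \ ({u, v} : Finset V), ((a : ℤ) - degS G S x) := by
        rw [hdiffeq]
        refine Finset.sum_congr rfl (fun x hx => ?_)
        have h3 := (Finset.mem_sdiff.1 hx).2
        simp only [Finset.mem_insert, Finset.mem_singleton, not_or] at h3
        rw [hothers x h3.1 h3.2]
      have hmemu' : u ∈ (Tset H S a).toFinset ↔ u ∈ Tset H S a := Set.mem_toFinset
      have hmemv' : v ∈ (Tset H S a).toFinset ↔ v ∈ Tset H S a := Set.mem_toFinset
      have keyu : (if u ∈ (Tset H S a).toFinset then (a : ℤ) - degS H S u else 0) =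
          (if u ∈ (Tset G S a).toFinset then (a : ℤ) - degS G S u else 0) +
            (if u ∈ Tset H S a then 1 else 0) := by
        by_cases h1 : degS G S u ≤ a - 1
        · rw [if_pos ((hTf'mem u).2 ⟨hu, by omega⟩), if_pos ((hTfmem u).2 ⟨hu, h1⟩),
            if_pos (Set.mem_toFinset.1 ((hTf'mem u).2 ⟨hu, by omega⟩))]
          push_cast
          omega
        · by_cases h2 : degS G S u ≤ a
          · rw [if_pos ((hTf'mem u).2 ⟨hu, by omega⟩),
              if_neg (fun hc => h1 ((hTfmem u).1 hc).2),
              if_pos (Set.mem_toFinset.1 ((hTf'mem u).2 ⟨hu, by omega⟩))]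
            push_cast
            omega
          · rw [if_neg (fun hc => h2 (by have := ((hTf'mem u).1 hc).2; omega)),
              if_neg (fun hc => h1 ((hTfmem u).1 hc).2),
              if_neg (fun hc => h2 (by have := hc.2; omega))]
            ring
      have keyv : (if v ∈ (Tset H S a).toFinset then (a : ℤ) - degS H S v else 0) =
          (if v ∈ (Tset G S a).toFinset then (a : ℤ) - degS G S v else 0) +
            (if v ∈ Tset H S a then 1 else 0) := by
        by_cases h1 : degS G S v ≤ a - 1
        · rw [if_pos ((hTf'mem v).2 ⟨hv, by omega⟩), if_pos ((hTfmem v).2 ⟨hv, h1⟩),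
            if_pos (Set.mem_toFinset.1 ((hTf'mem v).2 ⟨hv, by omega⟩))]
          push_cast
          omega
        · by_cases h2 : degS G S v ≤ a
          · rw [if_pos ((hTf'mem v).2 ⟨hv, by omega⟩),
              if_neg (fun hc => h1 ((hTfmem v).1 hc).2),
              if_pos (Set.mem_toFinset.1 ((hTf'mem v).2 ⟨hv, by omega⟩))]
            push_cast
            omega
          · rw [if_neg (fun hc => h2 (by have := ((hTf'mem v).1 hc).2; omega)),
              if_neg (fun hc => h1 ((hTfmem v).1 hc).2),
              if_neg (fun hc => h2 (by have := hc.2; omega))]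
            ring
      rw [hsumeq, keyu, keyv]
      ring
    rw [cond_iff, cond_iff', hρ, hkey]
    push_cast
    constructor <;> intro h <;> linarith

end Suff

theorem stmt_11 {V : Type*} [Fintype V] (G : SimpleGraph V) (a b : ℕ)
    (ha : 1 ≤ a) (hab : a < b) (u v : V) (huv : G.Adj u v) :
    HasABFactor (G.deleteEdges {s(u, v)}) a b ↔
      ∀ S : Set V,
        a * (Tset G S a).ncard +
            (let T' := Tset (G.deleteEdges {s(u, v)}) S a
             if u ∈ T' ∧ v ∈ T' then 2
             else if (u ∈ T' ∧ v ∉ S ∧ v ∉ T') ∨ (v ∈ T' ∧ u ∉ S ∧ u ∉ T') then 1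
             else 0) ≤
          b * S.ncard + dSum G S (Tset G S a) := by
  constructor
  · intro hf S
    exact (transfer G a b ha huv S).1 ((cond_iff _ a b S).2 (necessity hf S))
  · intro h
    apply sufficiency ha hab
    intro S
    exact (cond_iff _ a b S).1 ((transfer G a b ha huv S).2 (h S))
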